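/- Context merging is stable: if declarations d1 occurs before d2 in Ψ (or both in Φ), then d1 occurs before d2 in the merge Ψ ⋈ Φ, assuming all declarations in Ψ and Φ are distinct. -/

import Mathlib

/-- A context declaration: a variable name together with its level. -/
structure Decl where
  name : ℕ
  level : ℕ
deriving DecidableEq

/-- Right-to-left merge on reversed contexts (head = rightmost declaration). -/
def mergeRev : List Decl → List Decl → List Decl
  | [], Φ => Φ
  | Ψ, [] => Ψ
  | x :: Ψ, y :: Φ =>
    if y.level ≤ x.level then y :: mergeRev (x :: Ψ) Φ
    else x :: mergeRev Ψ (y :: Φ)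
termination_by Ψ Φ => Ψ.length + Φ.length

/-- Context merging `Ψ ⋈ Φ`, defined recursively from the right ends:
`(Ψ, x) ⋈ (Φ, y)` places `y` last if `level y ≤ level x`, else places `x` last. -/
def merge (Ψ Φ : List Decl) : List Decl :=
  (mergeRev Ψ.reverse Φ.reverse).reverse

/-- Chopping `Ψ↾n`: remove trailing declarations of level `< n`,
stopping at the first declaration (from the right) of level `≥ n`. -/
def chop (Ψ : List Decl) (n : ℕ) : List Decl :=
  (Ψ.reverse.dropWhile (fun d => d.level < n)).reverse

/-- A context is well-ordered if its levels are non-increasing left to right. -/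
def SortedCtx (Ψ : List Decl) : Prop :=
  (Ψ.map Decl.level).Pairwise (· ≥ ·)

/-- `d1` occurs (strictly) before `d2` in the list `l`. -/
def Before (l : List Decl) (d1 d2 : Decl) : Prop :=
  ∃ i j : Fin l.length, i < j ∧ l.get i = d1 ∧ l.get j = d2


theorem sublist_mergeRev_left : ∀ Ψ Φ : List Decl, Ψ.Sublist $ mergeRev Ψ Φ
  | [], Φ => by simp [mergeRev]
  | x :: Ψ, [] => by simp [mergeRev]
  | x :: Ψ, y :: Φ => by
    rw [mergeRev]
    split
    · exact (sublist_mergeRev_left (x :: Ψ) Φ).cons _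
    · exact (sublist_mergeRev_left Ψ (y :: Φ)).cons₂ _
termination_by Ψ Φ => Ψ.length + Φ.length

theorem sublist_mergeRev_right : ∀ Ψ Φ : List Decl, Φ.Sublist $ mergeRev Ψ Φ
  | [], Φ => by simp [mergeRev]
  | x :: Ψ, [] => by simp [mergeRev]
  | x :: Ψ, y :: Φ => by
    rw [mergeRev]
    split
    · exact (sublist_mergeRev_right (x :: Ψ) Φ).cons₂ _
    · exact (sublist_mergeRev_right Ψ (y :: Φ)).cons _
termination_by Ψ Φ => Ψ.length + Φ.length

theorem before_iff (l : List Decl) (d1 d2 : Decl) :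
    Before l d1 d2 ↔ List.Sublist [d1, d2] l := by
  constructor
  · rintro ⟨i, j, hij, h1, h2⟩
    have hdrop : l.get i :: l.drop (i + 1) = l.drop i := List.getElem_cons_drop _
    have hmem : d2 ∈ l.drop (i + 1) := by
      subst h2
      have hlt : (j : ℕ) - (i + 1) < (l.drop (i + 1)).length := by
        simp only [List.length_drop]
        omega
      refine List.mem_iff_getElem.mpr ⟨(j : ℕ) - (i + 1), hlt, ?_⟩
      rw [List.getElem_drop, List.get_eq_getElem]
      simp [show (i : ℕ) + 1 + ((j : ℕ) - (i + 1)) = (j : ℕ) from by omega]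
    have h2s : [d2].Sublist $ l.drop (i + 1) := List.singleton_sublist.mpr hmem
    have : [d1, d2].Sublist $ l.get i :: l.drop (i + 1) := by
      rw [h1] at hdrop ⊢
      exact h2s.cons₂ _
    exact (hdrop ▸ this).trans (List.drop_sublist _ _)
  · intro hs
    obtain ⟨f, hf⟩ := List.sublist_iff_exists_fin_orderEmbedding_get_eq.mp hs
    exact ⟨f ⟨0, by simp⟩, f ⟨1, by simp⟩, f.strictMono (by simp), (hf ⟨0, by simp⟩).symm, (hf ⟨1, by simp⟩).symm⟩

/-- Merging is stable: relative order of declarations coming from the same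
context is preserved, assuming all declarations are distinct. -/
theorem merge_stable (Ψ Φ : List Decl) (d1 d2 : Decl)
    (hnd : (Ψ ++ Φ).Nodup)
    (h : Before Ψ d1 d2 ∨ Before Φ d1 d2) :
    Before (merge Ψ Φ) d1 d2 := by
  rw [before_iff]
  have hl : Ψ.Sublist $ merge Ψ Φ := by
    have := (sublist_mergeRev_left Ψ.reverse Φ.reverse).reverse
    simpa [merge] using this
  have hr : Φ.Sublist $ merge Ψ Φ := by
    have := (sublist_mergeRev_right Ψ.reverse Φ.reverse).reverse
    simpa [merge] using this
  rcases h with h | h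
  · exact ((before_iff _ _ _).mp h).trans hl
  · exact ((before_iff _ _ _).mp h).trans hr
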